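/- Let X₁, ..., Xₙ be i.i.d. random vectors in ℝ^p whose last coordinate X_i(p) satisfies P(X_i(p) = 0) = 1 − 1/γ for some γ > 1, independent of the other coordinates, and let Y₁, ..., Yₙ be i.i.d. centered Gaussian vectors with E[Y_iY_iᵀ] = E[X_iX_iᵀ], where the last coordinate of X has a nondegenerate symmetric distribution so that Var(X_i(p)) > 0. Then μ(n^{−1/2}Σ X_i, n^{−1/2}Σ Y_i) ≥ (1/2)(1 − 1/γ)ⁿ. -/

import Mathlib

open MeasureTheory ProbabilityTheory

/-- Rectangle (Kolmogorov-type) distance between the laws of two random vectors: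
`μ(U,V) = sup_r |P(U ⪯ r) - Q(V ⪯ r)|` with `⪯` coordinatewise. -/
noncomputable def rectDist {Ω Ω' : Type*} [MeasurableSpace Ω] [MeasurableSpace Ω']
    (P : Measure Ω) (Q : Measure Ω') {p : ℕ}
    (U : Ω → (Fin p → ℝ)) (V : Ω' → (Fin p → ℝ)) : ℝ :=
  ⨆ r : Fin p → ℝ,
    |(P {ω | ∀ j, U ω j ≤ r j}).toReal - (Q {ω | ∀ j, V ω j ≤ r j}).toReal|

/-- Third directional derivative `⟨∇³f(x), h⊗h⊗h⟩ = d³/dt³ f(x+th)|_{t=0}`. -/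
noncomputable def thirdDirDeriv {p : ℕ} (f : (Fin p → ℝ) → ℝ) (x h : Fin p → ℝ) : ℝ :=
  iteratedDeriv 3 (fun t : ℝ => f (x + t • h)) 0

/-- Ideal metric of order 3: sup over `f` with `‖∇³f(x)‖₁ ≤ 1` of `|E f(U) - E f(V)|`.
(Recall that on `Fin p → ℝ` the default norm `‖·‖` is the sup norm, so
`∀ h, ‖h‖ ≤ 1 → |thirdDirDeriv f x h| ≤ 1` says exactly `‖∇³f(x)‖₁ ≤ 1`.) -/
noncomputable def zeta3 {Ω : Type*} [MeasurableSpace Ω] (P : Measure Ω) {p : ℕ}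
    (U V : Ω → (Fin p → ℝ)) : ℝ :=
  sSup {d : ℝ | ∃ f : (Fin p → ℝ) → ℝ,
    (∀ x h, ‖h‖ ≤ 1 → |thirdDirDeriv f x h| ≤ 1) ∧
    d = |∫ ω, f (U ω) ∂P - ∫ ω, f (V ω) ∂P|}

/-- Total variation measure `|μ - ν|` of the difference of two finite measures. -/
noncomputable def tvDiff {α : Type*} [MeasurableSpace α] (μ ν : Measure α) : Measure α :=
  (μ - ν) + (ν - μ)

/-- Pseudo-moment of order `k`: `ν_k(U,V) = ∫ ‖x‖_∞^k |P_U - P_V|(dx)`. -/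
noncomputable def pseudoMoment {Ω : Type*} [MeasurableSpace Ω] (P : Measure Ω) {p : ℕ}
    (k : ℕ) (U V : Ω → (Fin p → ℝ)) : ℝ :=
  ∫ x, ‖x‖ ^ k ∂(tvDiff (P.map U) (P.map V))

/-- A measure on `ℝ^p` is centered Gaussian with covariance matrix `S` iff every linear
functional pushes it to a one-dimensional centered Gaussian with the right variance. -/
def IsCenteredGaussian {p : ℕ} (μ : Measure (Fin p → ℝ)) (S : Matrix (Fin p) (Fin p) ℝ) : Prop :=
  ∀ l : Fin p → ℝ, μ.map (fun x => ∑ j, l j * x j) =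
    ProbabilityTheory.gaussianReal 0 (Real.toNNReal (dotProduct l (S.mulVec l)))

/-- Standard Gaussian measure `N(0, I_p)` on `ℝ^p`. -/
noncomputable def stdGaussianPi (p : ℕ) : Measure (Fin p → ℝ) :=
  Measure.pi fun _ => ProbabilityTheory.gaussianReal 0 1

/-- `log(ep)`. -/
noncomputable def logep (p : ℕ) : ℝ := Real.log (Real.exp 1 * p)

/-- lower bound via an atom. If the (iid) `X_i` have an atom of mass
`1 - 1/γ` at `0` in coordinate `j₀`, and the `Y_i` are iid centered Gaussians with the
covariance of the `X_i`, nondegenerate in coordinate `j₀`, then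
`μ(n^{-1/2} Σ X_i, n^{-1/2} Σ Y_i) ≥ (1/2)(1 - 1/γ)^n`. -/
lemma sum_indep_gaussian_noatom {Ω : Type*} [MeasurableSpace Ω] (P : Measure Ω)
    [IsProbabilityMeasure P] {n : ℕ} (hn : 0 < n) (W : Fin n → Ω → ℝ)
    (hWm : ∀ i, Measurable (W i))
    (hindep : iIndepFun W P)
    {v : NNReal} (hv : v ≠ 0) (h0 : P.map (W ⟨0, hn⟩) = gaussianReal 0 v) :
    P {ω | ∑ i, W i ω = 0} = 0 := by
  classical
  set i0 : Fin n := ⟨0, hn⟩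
  set R : Ω → ℝ := fun ω => ∑ j ∈ Finset.univ.erase i0, W j ω with hR
  have hRm : Measurable R := Finset.measurable_sum _ fun j _ => hWm j
  have hind : IndepFun R (W i0) P := by
    have h := hindep.indepFun_finsetSum_of_notMem hWm (Finset.notMem_erase i0 Finset.univ)
    have : (∑ j ∈ Finset.univ.erase i0, W j) = R := by
      ext ω; simp [R, Finset.sum_apply]
    rwa [this] at h
  have hmap : P.map (fun ω => (R ω, W i0 ω)) = (P.map R).prod (P.map (W i0)) :=
    (indepFun_iff_map_prod_eq_prod_map_map hRm.aemeasurable (hWm i0).aemeasurable).mp hind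
  have mset : MeasurableSet {q : ℝ × ℝ | q.1 + q.2 = 0} :=
    (measurable_fst.add measurable_snd) (measurableSet_singleton 0)
  have hpre : {ω | ∑ i, W i ω = 0}
      = (fun ω => (R ω, W i0 ω)) ⁻¹' {q : ℝ × ℝ | q.1 + q.2 = 0} := by
    ext ω
    simp only [Set.mem_setOf_eq, Set.mem_preimage]
    rw [← Finset.sum_erase_add Finset.univ (fun j => W j ω) (Finset.mem_univ i0)]
  rw [hpre, ← Measure.map_apply (hRm.prodMk (hWm i0)) mset, hmap, h0,
    Measure.prod_apply mset]
  have : ∀ r : ℝ, (gaussianReal 0 v) (Prod.mk r ⁻¹' {q : ℝ × ℝ | q.1 + q.2 = 0}) = 0 := by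
    intro r
    have : Prod.mk r ⁻¹' {q : ℝ × ℝ | q.1 + q.2 = 0} = {-r} := by
      ext w; simp only [Set.mem_preimage, Set.mem_setOf_eq, Set.mem_singleton_iff]
      constructor <;> intro h <;> linarith
    rw [this]
    exact gaussianReal_absolutelyContinuous 0 hv (measure_singleton _)
  simp only [this, lintegral_zero]

theorem atom_lower_bound {Ω : Type*} [MeasurableSpace Ω] (P : Measure Ω)
    [IsProbabilityMeasure P] {p n : ℕ} (hn : 0 < n) (j₀ : Fin p)
    (X Y : Fin n → Ω → (Fin p → ℝ)) (γ : ℝ) (hγ : 1 < γ)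
    (hXm : ∀ i, Measurable (X i)) (hYm : ∀ i, Measurable (Y i))
    (hXindep : iIndepFun X P)
    (hYindep : iIndepFun Y P)
    (hXid : ∀ i, P.map (X i) = P.map (X ⟨0, hn⟩))
    (hXcentered : ∀ i j, ∫ ω, X i ω j ∂P = 0)
    (hatom : ∀ i, P {ω | X i ω j₀ = 0} = ENNReal.ofReal (1 - 1 / γ))
    (S : Matrix (Fin p) (Fin p) ℝ)
    (hS : ∀ j k, S j k = ∫ ω, X ⟨0, hn⟩ ω j * X ⟨0, hn⟩ ω k ∂P)
    (hYgauss : ∀ i, IsCenteredGaussian (P.map (Y i)) S)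
    (hSj₀ : 0 < S j₀ j₀) :
    (1 / 2) * (1 - 1 / γ) ^ n ≤
      rectDist P P (fun ω => (Real.sqrt n)⁻¹ • ∑ i, X i ω)
        (fun ω => (Real.sqrt n)⁻¹ • ∑ i, Y i ω) := by
  classical
  set T : Ω → Fin p → ℝ := fun ω => (Real.sqrt n)⁻¹ • ∑ i, X i ω with hTdef
  set G : Ω → Fin p → ℝ := fun ω => (Real.sqrt n)⁻¹ • ∑ i, Y i ω with hGdef
  have hsq : (0:ℝ) < Real.sqrt n := Real.sqrt_pos.mpr (by exact_mod_cast hn)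
  have hTm : Measurable T := by
    apply measurable_pi_lambda
    intro j
    have : (fun ω => T ω j) = fun ω => (Real.sqrt n)⁻¹ * ∑ i, X i ω j := by
      funext ω; simp [T, Finset.sum_apply]
    rw [this]
    exact measurable_const.mul
      (Finset.measurable_sum _ fun i _ => (measurable_pi_apply j).comp (hXm i))
  have hGm : Measurable G := by
    apply measurable_pi_lambda
    intro j
    have : (fun ω => G ω j) = fun ω => (Real.sqrt n)⁻¹ * ∑ i, Y i ω j := by
      funext ω; simp [G, Finset.sum_apply]
    rw [this]
    exact measurable_const.mul
      (Finset.measurable_sum _ fun i _ => (measurable_pi_apply j).comp (hYm i))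
  have hEmeas : ∀ (Z : Ω → Fin p → ℝ), Measurable Z → ∀ rr : Fin p → ℝ,
      MeasurableSet {ω | ∀ j, Z ω j ≤ rr j} := by
    intro Z hZ rr
    rw [Set.setOf_forall]
    exact MeasurableSet.iInter fun j =>
      measurableSet_le ((measurable_pi_apply j).comp hZ) measurable_const
  set a : ℝ := (1 - 1/γ) ^ n with hadef
  have hγ0 : (0:ℝ) < 1 - 1/γ := by
    have : 1/γ < 1 := by rw [div_lt_one (by linarith)]; linarith
    linarith
  have ha : 0 < a := pow_pos hγ0 n
  -- atom event for X
  set D : Set Ω := ⋂ i, {ω | X i ω j₀ = 0} with hDdef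
  have hDmeas : MeasurableSet D := MeasurableSet.iInter fun i =>
    ((measurable_pi_apply j₀).comp (hXm i)) (measurableSet_singleton 0)
  have hPD : P D = ENNReal.ofReal a := by
    have hmi : ∀ i, MeasurableSet[MeasurableSpace.comap (X i) inferInstance]
        {ω | X i ω j₀ = 0} := by
      intro i
      exact ⟨{f | f j₀ = 0}, (measurable_pi_apply j₀) (measurableSet_singleton 0), rfl⟩
    rw [hDdef, hXindep.meas_iInter hmi]
    simp only [hatom]
    rw [Finset.prod_const, Finset.card_univ, Fintype.card_fin,
      ← ENNReal.ofReal_pow (by linarith)]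
  have hDT : ∀ ω ∈ D, T ω j₀ = 0 := by
    intro ω hω
    have : ∀ i, X i ω j₀ = 0 := fun i => Set.mem_iInter.mp hω i
    simp [T, Finset.sum_apply, this]
  -- Gaussian coordinate has no atom at 0
  have hGat : P {ω | G ω j₀ = 0} = 0 := by
    set i0 : Fin n := ⟨0, hn⟩
    set W : Fin n → Ω → ℝ := fun i ω => Y i ω j₀ with hWdef
    have hWm : ∀ i, Measurable (W i) := fun i => (measurable_pi_apply j₀).comp (hYm i)
    have hWindep : iIndepFun W P :=
      hYindep.comp (fun _ f => f j₀) (fun _ => measurable_pi_apply j₀)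
    set l : Fin p → ℝ := fun j => if j = j₀ then 1 else 0 with hldef
    have hfun : (fun x : Fin p → ℝ => ∑ j, l j * x j) = fun x => x j₀ := by
      funext x
      simp [l, ite_mul, Finset.sum_ite_eq']
    have hvar : dotProduct l (S.mulVec l) = S j₀ j₀ := by
      simp [dotProduct, Matrix.mulVec, l, ite_mul, mul_ite, Finset.sum_ite_eq',
        Finset.sum_ite_eq]
    have h0 : P.map (W i0) = gaussianReal 0 (Real.toNNReal (S j₀ j₀)) := by
      have hmm : P.map (W i0) = (P.map (Y i0)).map (fun x : Fin p → ℝ => x j₀) :=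
        (Measure.map_map (measurable_pi_apply j₀) (hYm i0)).symm
      have hl := hYgauss i0 l
      rw [hfun, hvar] at hl
      rw [hmm, hl]
    have hv : Real.toNNReal (S j₀ j₀) ≠ 0 := (Real.toNNReal_pos.mpr hSj₀).ne'
    have hsum := sum_indep_gaussian_noatom P hn W hWm hWindep hv h0
    have : {ω | G ω j₀ = 0} = {ω | ∑ i, W i ω = 0} := by
      ext ω
      simp only [Set.mem_setOf_eq, G, Pi.smul_apply, Finset.sum_apply, smul_eq_mul, W]
      constructor
      · intro h
        rcases mul_eq_zero.mp h with h | h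
        · exact absurd h (by positivity)
        · exact h
      · intro h; rw [h, mul_zero]
    rw [this, hsum]
  -- main ε-argument
  have main : ∀ ε : ℝ, 0 < ε → 1/2 * a ≤ rectDist P P T G + ε := by
    intro ε hε
    -- choose δ via the Gaussian atomlessness
    set B : ℕ → Set Ω := fun k => {ω | -(1/(k+1)) < G ω j₀ ∧ G ω j₀ ≤ 0} with hBdef
    have hBmeas : ∀ k, MeasurableSet (B k) := by
      intro k
      exact (measurableSet_lt measurable_const ((measurable_pi_apply j₀).comp hGm)).inter
        (measurableSet_le ((measurable_pi_apply j₀).comp hGm) measurable_const)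
    have hBanti : Antitone B := by
      intro k l hkl ω hω
      refine ⟨lt_of_le_of_lt ?_ hω.1, hω.2⟩
      have h1 : (1:ℝ)/(l+1) ≤ 1/(k+1) := by
        apply one_div_le_one_div_of_le (by positivity)
        have : (k:ℝ) ≤ l := Nat.cast_le.mpr hkl
        linarith
      linarith
    have hBi : P (⋂ k, B k) = 0 := by
      refine le_antisymm (le_trans (measure_mono ?_) hGat.le) zero_le
      intro ω hω
      have h2 : G ω j₀ ≤ 0 := (Set.mem_iInter.mp hω 0).2
      by_contra hne
      have hlt : G ω j₀ < 0 := lt_of_le_of_ne h2 hne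
      obtain ⟨k, hk⟩ := exists_nat_one_div_lt (show (0:ℝ) < -(G ω j₀) by linarith)
      have := (Set.mem_iInter.mp hω k).1
      linarith
    have htd : Filter.Tendsto (P ∘ B) Filter.atTop (nhds 0) := by
      have := tendsto_measure_iInter_atTop (μ := P)
        (fun k => (hBmeas k).nullMeasurableSet) hBanti ⟨0, measure_ne_top P _⟩
      rwa [hBi] at this
    obtain ⟨k, hk⟩ := (htd.eventually_lt_const (ENNReal.ofReal_pos.mpr hε)).exists
    -- choose m via continuity from below
    set F : ℕ → Set Ω := fun m => D ∩ {ω | ∀ j, T ω j ≤ (m:ℝ)} with hFdef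
    have hFmono : Monotone F := by
      intro m l hml ω hω
      refine ⟨hω.1, fun j => le_trans (hω.2 j) (by exact_mod_cast Nat.cast_le.mpr hml)⟩
    have hFU : (⋃ m, F m) = D := by
      apply Set.Subset.antisymm
      · exact Set.iUnion_subset fun m => Set.inter_subset_left
      · intro ω hω
        obtain ⟨m, hm⟩ := exists_nat_ge (∑ j, |T ω j|)
        refine Set.mem_iUnion.mpr ⟨m, hω, fun j => ?_⟩
        calc T ω j ≤ |T ω j| := le_abs_self _
          _ ≤ ∑ j', |T ω j'| :=
            Finset.single_le_sum (f := fun j' => |T ω j'|) (fun j' _ => abs_nonneg _)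
              (Finset.mem_univ j)
          _ ≤ m := hm
    have htu : Filter.Tendsto (P ∘ F) Filter.atTop (nhds (ENNReal.ofReal a)) := by
      have := tendsto_measure_iUnion_atTop (μ := P) hFmono
      rwa [hFU, hPD] at this
    have hlt : ENNReal.ofReal (a - ε) < ENNReal.ofReal a :=
      (ENNReal.ofReal_lt_ofReal_iff ha).mpr (by linarith)
    obtain ⟨m, hm⟩ := (htu.eventually_const_lt hlt).exists
    -- the two rectangles
    set δ : ℝ := 1/(k+1) with hδdef
    have hδ : 0 < δ := by positivity
    set r : Fin p → ℝ := fun j => if j = j₀ then 0 else m with hrdef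
    set r' : Fin p → ℝ := fun j => if j = j₀ then -δ else m with hr'def
    set s : Set Ω := {ω | ∀ j, T ω j ≤ r j} with hsdef
    set s' : Set Ω := {ω | ∀ j, T ω j ≤ r' j} with hs'def
    set u : Set Ω := {ω | ∀ j, G ω j ≤ r j} with hudef
    set u' : Set Ω := {ω | ∀ j, G ω j ≤ r' j} with hu'def
    have hss : s' ⊆ s := by
      intro ω h j
      have := h j
      by_cases hj : j = j₀ <;> simp only [hj, r, r', if_pos, if_neg, if_true] at this ⊢ <;>
        first | linarith | simpa [hj] using this
    have huu : u' ⊆ u := by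
      intro ω h j
      have := h j
      by_cases hj : j = j₀ <;> simp only [hj, r, r', if_pos, if_neg, if_true] at this ⊢ <;>
        first | linarith | simpa [hj] using this
    have hFs : F m ⊆ s \ s' := by
      intro ω hω
      have hT0 : T ω j₀ = 0 := hDT ω hω.1
      constructor
      · intro j
        by_cases hj : j = j₀
        · subst hj; simp [r, hT0]
        · simp only [r, if_neg hj]; exact hω.2 j
      · intro hcon
        have := hcon j₀
        simp only [r', if_pos rfl] at this
        rw [hT0] at this
        linarith
    have huB : u \ u' ⊆ B k := by
      rintro ω ⟨h1, h2⟩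
      have hj₀ : ¬ (G ω j₀ ≤ -δ) := by
        intro hcon
        apply h2
        intro j
        by_cases hj : j = j₀
        · subst hj; simpa [r'] using hcon
        · have := h1 j; simpa [r, r', hj] using this
      have hle : G ω j₀ ≤ 0 := by have := h1 j₀; simpa [r] using this
      exact ⟨by simpa [δ] using not_le.mp hj₀, hle⟩
    -- measure arithmetic
    have hsmeas := hEmeas T hTm r
    have hs'meas := hEmeas T hTm r'
    have humeas := hEmeas G hGm r
    have hu'meas := hEmeas G hGm r'
    have hadd1 : P s' + P (s \ s') = P s := by
      rw [measure_add_diff hs'meas.nullMeasurableSet s, Set.union_eq_self_of_subset_left hss]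
    have hadd2 : P u' + P (u \ u') = P u := by
      rw [measure_add_diff hu'meas.nullMeasurableSet u, Set.union_eq_self_of_subset_left huu]
    have hdT : ENNReal.ofReal (a - ε) < P (s \ s') := lt_of_lt_of_le hm (measure_mono hFs)
    have hdG : P (u \ u') < ENNReal.ofReal ε := lt_of_le_of_lt (measure_mono huB) hk
    have fin : ∀ t : Set Ω, P t ≠ ⊤ := fun t => measure_ne_top P t
    have hx : (P s).toReal = (P s').toReal + (P (s \ s')).toReal := by
      rw [← ENNReal.toReal_add (fin _) (fin _), hadd1]
    have hy : (P u).toReal = (P u').toReal + (P (u \ u')).toReal := by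
      rw [← ENNReal.toReal_add (fin _) (fin _), hadd2]
    have hxl : a - ε ≤ (P (s \ s')).toReal := by
      rcases le_or_gt (a - ε) 0 with h | h
      · exact le_trans h ENNReal.toReal_nonneg
      · calc a - ε = (ENNReal.ofReal (a - ε)).toReal := (ENNReal.toReal_ofReal h.le).symm
          _ ≤ (P (s \ s')).toReal := ENNReal.toReal_mono (fin _) hdT.le
    have hyl : (P (u \ u')).toReal ≤ ε := by
      calc (P (u \ u')).toReal ≤ (ENNReal.ofReal ε).toReal :=
            ENNReal.toReal_mono ENNReal.ofReal_ne_top hdG.le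
        _ = ε := ENNReal.toReal_ofReal hε.le
    -- bound the sup from below
    have hbdd : BddAbove (Set.range fun rr : Fin p → ℝ =>
        |(P {ω | ∀ j, T ω j ≤ rr j}).toReal - (P {ω | ∀ j, G ω j ≤ rr j}).toReal|) := by
      refine ⟨1, ?_⟩
      rintro x ⟨rr, rfl⟩
      have h1 : (P {ω | ∀ j, T ω j ≤ rr j}).toReal ≤ 1 := by
        rw [← ENNReal.toReal_one, ← measure_univ (μ := P)]
        exact ENNReal.toReal_mono (fin _) (measure_mono (Set.subset_univ _))
      have h2 : (P {ω | ∀ j, G ω j ≤ rr j}).toReal ≤ 1 := by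
        rw [← ENNReal.toReal_one, ← measure_univ (μ := P)]
        exact ENNReal.toReal_mono (fin _) (measure_mono (Set.subset_univ _))
      have h3 : (0:ℝ) ≤ (P {ω | ∀ j, T ω j ≤ rr j}).toReal := ENNReal.toReal_nonneg
      have h4 : (0:ℝ) ≤ (P {ω | ∀ j, G ω j ≤ rr j}).toReal := ENNReal.toReal_nonneg
      rw [abs_le]; constructor <;> linarith
    have hsup1 : |(P s).toReal - (P u).toReal| ≤ rectDist P P T G := le_ciSup hbdd r
    have hsup2 : |(P s').toReal - (P u').toReal| ≤ rectDist P P T G := le_ciSup hbdd r'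
    have e1 : (P s).toReal - (P u).toReal ≤ |(P s).toReal - (P u).toReal| := le_abs_self _
    have e2 : (P u').toReal - (P s').toReal ≤ |(P s').toReal - (P u').toReal| := by
      rw [abs_sub_comm]; exact le_abs_self _
    linarith
  refine le_of_forall_pos_le_add fun ε hε => ?_
  exact main ε hε
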